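/- Let γ : [0, ∞) → ℝⁿ be a C¹ curve with ‖γ(0)‖ = r, ⟨γ(0), γ′(0)⟩ = 0, ‖γ′(t)‖ = 1 for all t ≥ 0, and γ′ Lipschitz with constant 1/r. Then ‖γ(t)‖ ≥ r for every t ∈ [0, π·r]. -/

import Mathlib

open Real

private lemma mvtAbs {f f' : ℝ → ℝ} {a b C : ℝ} (hab : a ≤ b)
    (h : ∀ x ∈ Set.Icc a b, HasDerivAt f (f' x) x)
    (hb : ∀ x ∈ Set.Icc a b, |f' x| ≤ C) : |f b - f a| ≤ C * (b - a) := by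
  have H := Convex.norm_image_sub_le_of_norm_hasDerivWithin_le
    (f := f) (f' := f') (s := Set.Icc a b)
    (fun x hx => (h x hx).hasDerivWithinAt)
    (fun x hx => by simpa [Real.norm_eq_abs] using hb x hx)
    (convex_Icc a b) (Set.left_mem_Icc.2 hab) (Set.right_mem_Icc.2 hab)
  simpa [Real.norm_eq_abs, abs_of_nonneg (sub_nonneg.2 hab)] using H

private lemma monoDeriv {f f' : ℝ → ℝ} {a b : ℝ} (hab : a ≤ b)
    (h : ∀ x ∈ Set.Icc a b, HasDerivAt f (f' x) x)
    (h0 : ∀ x ∈ Set.Icc a b, 0 ≤ f' x) : f a ≤ f b := by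
  have hmono := monotoneOn_of_deriv_nonneg (convex_Icc a b)
    (fun x hx => (h x hx).continuousAt.continuousWithinAt)
    (fun x hx => ((h x (interior_subset hx)).differentiableAt).differentiableWithinAt)
    (fun x hx => by rw [(h x (interior_subset hx)).deriv]; exact h0 x (interior_subset hx))
  exact hmono (Set.left_mem_Icc.2 hab) (Set.right_mem_Icc.2 hab) hab

private lemma sin_sub_le {a b : ℝ} (hab : a ≤ b) : |Real.sin b - Real.sin a| ≤ b - a := by
  have := mvtAbs (C := 1) hab (fun x _ => Real.hasDerivAt_sin x)
    (fun x _ => Real.abs_cos_le_one x)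
  simpa using this

private lemma cos_sub_le {a b : ℝ} (hab : a ≤ b) : |Real.cos b - Real.cos a| ≤ b - a := by
  have := mvtAbs (C := 1) hab (fun x _ => Real.hasDerivAt_cos x)
    (fun x _ => by simpa using Real.abs_sin_le_one x)
  simpa using this

private lemma sin_taylor {a b : ℝ} (hab : a ≤ b) :
    |Real.sin b - Real.sin a - Real.cos a * (b - a)| ≤ (b - a)^2 := by
  have h := mvtAbs (f := fun s => Real.sin s - Real.cos a * s)
      (f' := fun s => Real.cos s - Real.cos a) (C := b - a) hab
    (fun x _ => (Real.hasDerivAt_sin x).sub (by simpa using (hasDerivAt_id x).const_mul (Real.cos a)))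
    (fun x hx => (cos_sub_le hx.1).trans (by linarith [hx.2]))
  have e : (Real.sin b - Real.cos a * b) - (Real.sin a - Real.cos a * a)
      = Real.sin b - Real.sin a - Real.cos a * (b - a) := by ring
  rw [e] at h
  calc |Real.sin b - Real.sin a - Real.cos a * (b - a)| ≤ (b-a)*(b-a) := h
    _ = (b-a)^2 := by ring

private lemma cos_taylor {a b : ℝ} (hab : a ≤ b) :
    |Real.cos b - Real.cos a + Real.sin a * (b - a)| ≤ (b - a)^2 := by
  have h := mvtAbs (f := fun s => Real.cos s + Real.sin a * s)
      (f' := fun s => -Real.sin s + Real.sin a) (C := b - a) hab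
    (fun x _ => (Real.hasDerivAt_cos x).add (by simpa using (hasDerivAt_id x).const_mul (Real.sin a)))
    (fun x hx => by
      have := sin_sub_le hx.1
      rw [abs_sub_comm] at this
      calc |(-Real.sin x + Real.sin a)| = |Real.sin a - Real.sin x| := by ring_nf
        _ ≤ x - a := this
        _ ≤ b - a := by linarith [hx.2])
  have e : (Real.cos b + Real.sin a * b) - (Real.cos a + Real.sin a * a)
      = Real.cos b - Real.cos a + Real.sin a * (b - a) := by ring
  rw [e] at h
  calc |Real.cos b - Real.cos a + Real.sin a * (b - a)| ≤ (b-a)*(b-a) := h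
    _ = (b-a)^2 := by ring

set_option maxHeartbeats 1600000 in
theorem stmt3 (n : ℕ) (r : ℝ) (hr : 0 < r)
    (γ γ' : ℝ → EuclideanSpace ℝ (Fin n))
    (hderiv : ∀ t ∈ Set.Ici (0:ℝ), HasDerivAt γ (γ' t) t)
    (h0 : ‖γ 0‖ = r)
    (horth : (inner ℝ (γ 0) (γ' 0) : ℝ) = 0)
    (hspeed : ∀ t ∈ Set.Ici (0:ℝ), ‖γ' t‖ = 1)
    (hlip : LipschitzOnWith (Real.toNNReal (1/r)) γ' (Set.Ici 0)) :
    ∀ t ∈ Set.Icc (0:ℝ) (π * r), r ≤ ‖γ t‖ := by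
  set T : ℝ := π * r with hTdef
  have hT : 0 < T := by positivity
  set M : ℝ := r + T with hMdef
  have hM0 : 0 < M := by positivity
  set L : ℝ := 1 + M / r with hLdef
  have hL0 : 0 < L := by positivity
  set m : ℝ → ℝ := fun t => inner ℝ (γ t) (γ' t) with hmdef
  set d : ℝ → ℝ := fun t => (inner ℝ (γ t) (γ t) : ℝ) - r ^ 2 with hddef
  set F : ℝ → ℝ := fun t => 2 * m t * Real.sin (t / r) - d t / r * Real.cos (t / r) with hFdef
  -- Lipschitz bound on γ' in usable form
  have hlip' : ∀ x z : ℝ, 0 ≤ x → x ≤ z → ‖γ' z - γ' x‖ ≤ (z - x) / r := by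
    intro x z hx hxz
    have h1 := hlip.dist_le_mul z (by exact le_trans hx hxz) x hx
    rw [Real.coe_toNNReal _ (by positivity)] at h1
    rw [dist_eq_norm] at h1
    calc ‖γ' z - γ' x‖ ≤ 1 / r * dist z x := h1
      _ = (z - x) / r := by
          rw [Real.dist_eq, abs_of_nonneg (by linarith)]; ring
  -- γ is 1-Lipschitz
  have hdist : ∀ x z : ℝ, 0 ≤ x → x ≤ z → ‖γ z - γ x‖ ≤ z - x := by
    intro x z hx hxz
    have H := Convex.norm_image_sub_le_of_norm_hasDerivWithin_le
      (f := γ) (f' := γ') (s := Set.Icc x z) (C := 1)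
      (fun u hu => (hderiv u (le_trans hx hu.1)).hasDerivWithinAt)
      (fun u hu => le_of_eq (hspeed u (le_trans hx hu.1)))
      (convex_Icc x z) (Set.left_mem_Icc.2 hxz) (Set.right_mem_Icc.2 hxz)
    simpa [Real.norm_eq_abs, abs_of_nonneg (sub_nonneg.2 hxz)] using H
  -- bound on ‖γ x‖
  have hMb : ∀ x ∈ Set.Icc (0:ℝ) T, ‖γ x‖ ≤ M := by
    intro x hx
    have h1 : ‖γ x - γ 0‖ ≤ x - 0 := hdist 0 x le_rfl hx.1
    have h2 : ‖γ x‖ ≤ ‖γ 0‖ + ‖γ x - γ 0‖ := by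
      have := norm_add_le (γ 0) (γ x - γ 0); simpa using this
    rw [h0] at h2
    have := hx.2
    simp only [hMdef]; linarith
  -- chord bound
  have hchord : ∀ x z : ℝ, 0 ≤ x → x ≤ z →
      1 - (z - x) ^ 2 / (2 * r ^ 2) ≤ (inner ℝ (γ' x) (γ' z) : ℝ) := by
    intro x z hx hxz
    have h1 : ‖γ' z - γ' x‖ ≤ (z - x) / r := hlip' x z hx hxz
    have h2 : ‖γ' z - γ' x‖ ^ 2 = ‖γ' z‖ ^ 2 - 2 * (inner ℝ (γ' z) (γ' x) : ℝ) + ‖γ' x‖ ^ 2 :=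
      norm_sub_sq_real _ _
    rw [hspeed z (le_trans hx hxz), hspeed x hx] at h2
    have h3 : ‖γ' z - γ' x‖ ^ 2 ≤ ((z - x) / r) ^ 2 := by
      apply sq_le_sq' _ h1
      linarith [norm_nonneg (γ' z - γ' x)]
    have hcm : (inner ℝ (γ' x) (γ' z) : ℝ) = inner ℝ (γ' z) (γ' x) := real_inner_comm _ _
    rw [hcm]
    have hr2 : (0:ℝ) < r ^ 2 := by positivity
    rw [h2, div_pow, le_div_iff₀ hr2] at h3
    have h6 : (1 - (inner ℝ (γ' z) (γ' x) : ℝ)) ≤ (z - x) ^ 2 / (2 * r ^ 2) := by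
      rw [le_div_iff₀ (by positivity)]
      nlinarith [h3]
    linarith
  -- integrated chord bound
  have hf5 : ∀ x z : ℝ, 0 ≤ x → x ≤ z →
      (z - x) - (z - x) ^ 3 / (6 * r ^ 2) ≤ (inner ℝ (γ z - γ x) (γ' z) : ℝ) := by
    intro x z hx hxz
    have hmono := monoDeriv (f := fun s => (inner ℝ (γ s) (γ' z) : ℝ) - s - (z - s) ^ 3 / (6 * r ^ 2))
      (f' := fun s => (inner ℝ (γ' s) (γ' z) : ℝ) - 1 + (z - s) ^ 2 / (2 * r ^ 2)) hxz
      (fun s hs => by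
        have hd1 : HasDerivAt (fun s => (inner ℝ (γ s) (γ' z) : ℝ)) (inner ℝ (γ' s) (γ' z) : ℝ) s := by
          have := (hderiv s (le_trans hx hs.1)).inner ℝ (hasDerivAt_const s (γ' z))
          simpa using this
        have hd2 : HasDerivAt (fun s : ℝ => (z - s) ^ 3 / (6 * r ^ 2))
            (3 * (z - s) ^ 2 * (-1) / (6 * r ^ 2)) s := by
          exact (((hasDerivAt_id s).const_sub z).pow 3).div_const _
        have := (hd1.sub (hasDerivAt_id s)).sub hd2
        exact this.congr_deriv (by ring))
      (fun s hs => by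
        have := hchord s z (le_trans hx hs.1) hs.2
        have h2 : (z - s) ^ 2 / (2 * r ^ 2) - (z - s) ^ 2 / (2 * r ^ 2) = 0 := by ring
        linarith [this])
    have e : (inner ℝ (γ z - γ x) (γ' z) : ℝ) = (inner ℝ (γ z) (γ' z) : ℝ) - (inner ℝ (γ x) (γ' z) : ℝ) := by
      rw [inner_sub_left]
    simp only [sub_self] at hmono
    rw [e]
    have h03 : (0:ℝ) ^ 3 / (6 * r ^ 2) = 0 := by norm_num
    linarith [hmono]
  -- lower bound for m increments
  have hm_lb : ∀ x z : ℝ, 0 ≤ x → x ≤ z →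
      (1 - ‖γ x‖ / r) * (z - x) - (z - x) ^ 3 / (6 * r ^ 2) ≤ m z - m x := by
    intro x z hx hxz
    have e : m z - m x = (inner ℝ (γ z - γ x) (γ' z) : ℝ) + (inner ℝ (γ x) (γ' z - γ' x) : ℝ) := by
      simp only [hmdef, inner_sub_left, inner_sub_right]; ring
    have h1 := hf5 x z hx hxz
    have h2 : |(inner ℝ (γ x) (γ' z - γ' x) : ℝ)| ≤ ‖γ x‖ * ((z - x) / r) := by
      refine le_trans (abs_real_inner_le_norm _ _) ?_
      exact mul_le_mul_of_nonneg_left (hlip' x z hx hxz) (norm_nonneg _)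
    have h2' := (abs_le.mp h2).1
    rw [e]
    have : ‖γ x‖ * ((z - x) / r) = ‖γ x‖ / r * (z - x) := by ring
    nlinarith [h1, h2']
  -- Lipschitz bound for m on [0,T]
  have hm_lip : ∀ x z : ℝ, 0 ≤ x → x ≤ z → z ≤ T → |m z - m x| ≤ L * (z - x) := by
    intro x z hx hxz hzT
    have e : m z - m x = (inner ℝ (γ z - γ x) (γ' z) : ℝ) + (inner ℝ (γ x) (γ' z - γ' x) : ℝ) := by
      simp only [hmdef, inner_sub_left, inner_sub_right]; ring
    have h1 : |(inner ℝ (γ z - γ x) (γ' z) : ℝ)| ≤ (z - x) := by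
      refine le_trans (abs_real_inner_le_norm _ _) ?_
      rw [hspeed z (le_trans hx hxz), mul_one]
      exact hdist x z hx hxz
    have h2 : |(inner ℝ (γ x) (γ' z - γ' x) : ℝ)| ≤ M * ((z - x) / r) := by
      refine le_trans (abs_real_inner_le_norm _ _) ?_
      exact mul_le_mul (hMb x ⟨hx, le_trans hxz hzT⟩) (hlip' x z hx hxz)
        (norm_nonneg _) (le_of_lt hM0)
    rw [e]
    calc |(inner ℝ (γ z - γ x) (γ' z) : ℝ) + (inner ℝ (γ x) (γ' z - γ' x) : ℝ)|
        ≤ |(inner ℝ (γ z - γ x) (γ' z) : ℝ)| + |(inner ℝ (γ x) (γ' z - γ' x) : ℝ)| := abs_add_le _ _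
      _ ≤ (z - x) + M * ((z - x) / r) := add_le_add h1 h2
      _ = L * (z - x) := by rw [hLdef]; field_simp
  -- bounds on m and d
  have hmb : ∀ x ∈ Set.Icc (0:ℝ) T, |m x| ≤ M := by
    intro x hx
    refine le_trans (abs_real_inner_le_norm _ _) ?_
    rw [hspeed x hx.1, mul_one]
    exact hMb x hx
  have hdb : ∀ x ∈ Set.Icc (0:ℝ) T, |d x| ≤ M ^ 2 := by
    intro x hx
    have h1 : (inner ℝ (γ x) (γ x) : ℝ) = ‖γ x‖ ^ 2 := real_inner_self_eq_norm_sq _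
    have h2 : ‖γ x‖ ≤ M := hMb x hx
    have h3 : r ≤ M := by rw [hMdef]; linarith
    have h4 : (0:ℝ) ≤ ‖γ x‖ := norm_nonneg _
    rw [hddef, abs_le]
    constructor <;> simp only [h1] <;> nlinarith
  -- derivative of d
  have hmd : ∀ t : ℝ, 0 ≤ t → HasDerivAt d (2 * m t) t := by
    intro t ht
    have h1 := (hderiv t ht).inner ℝ (hderiv t ht)
    have h2 : (inner ℝ (γ t) (γ' t) : ℝ) + (inner ℝ (γ' t) (γ t) : ℝ) = 2 * m t := by
      have hc : (inner ℝ (γ' t) (γ t) : ℝ) = (inner ℝ (γ t) (γ' t) : ℝ) := real_inner_comm _ _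
      simp only [hmdef]; linarith [hc]
    rw [h2] at h1
    simpa [hddef] using h1.sub_const (r ^ 2)
  -- second order bound for d increments
  have hd9 : ∀ x z : ℝ, 0 ≤ x → x ≤ z → z ≤ T →
      |d z - d x - 2 * m x * (z - x)| ≤ 2 * L * (z - x) ^ 2 := by
    intro x z hx hxz hzT
    have H := mvtAbs (f := fun s => d s - 2 * m x * s) (f' := fun s => 2 * m s - 2 * m x)
      (C := 2 * L * (z - x)) hxz
      (fun s hs => by
        have := (hmd s (le_trans hx hs.1)).sub (((hasDerivAt_id s).const_mul (2 * m x)))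
        exact this.congr_deriv (by ring))
      (fun s hs => by
        have h1 := hm_lip x s hx hs.1 (le_trans hs.2 hzT)
        have e2 : 2 * m s - 2 * m x = 2 * (m s - m x) := by ring
        calc |2 * m s - 2 * m x| = 2 * |m s - m x| := by rw [e2, abs_mul]; norm_num
          _ ≤ 2 * (L * (s - x)) := by linarith
          _ ≤ 2 * L * (z - x) := by nlinarith [hs.2, hL0])
    have e : (d z - 2 * m x * z) - (d x - 2 * m x * x) = d z - d x - 2 * m x * (z - x) := by ring
    rw [e] at H
    calc |d z - d x - 2 * m x * (z - x)| ≤ 2 * L * (z - x) * (z - x) := H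
      _ = 2 * L * (z - x) ^ 2 := by ring
  set C : ℝ := T / (3 * r ^ 2) + 2 * (1 + M / r) / r + 2 * M / r ^ 2 + 2 * L / r
      + 2 * M / r ^ 2 + M ^ 2 / r ^ 3 with hCdef
  have hC0 : 0 < C := by positivity
  -- key quadratic increment bound for F
  have hkey : ∀ x z : ℝ, 0 ≤ x → x ≤ z → z ≤ T → F x - C * (z - x) ^ 2 ≤ F z := by
    intro x z hx hxz hzT
    have hzr : z / r ≤ π := by
      rw [div_le_iff₀ hr]; rw [hTdef] at hzT; linarith
    have hxr : x / r ≤ π := le_trans (by apply div_le_div_of_nonneg_right hxz hr.le) hzr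
    have hx0r : 0 ≤ x / r := div_nonneg hx hr.le
    have hz0r : 0 ≤ z / r := div_nonneg (le_trans hx hxz) hr.le
    have hxzr : x / r ≤ z / r := by apply div_le_div_of_nonneg_right hxz hr.le
    have hΔ : 0 ≤ z - x := by linarith
    have hΔT : z - x ≤ T := by linarith
    have hrw : z / r - x / r = (z - x) / r := by ring
    have hs1 : 0 ≤ Real.sin (x / r) := Real.sin_nonneg_of_nonneg_of_le_pi hx0r hxr
    have hs2 : 0 ≤ Real.sin (z / r) := Real.sin_nonneg_of_nonneg_of_le_pi hz0r hzr
    have hs2le1 : Real.sin (z / r) ≤ 1 := Real.sin_le_one _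
    have hc1abs : |Real.cos (x / r)| ≤ 1 := Real.abs_cos_le_one _
    have hc2abs : |Real.cos (z / r)| ≤ 1 := Real.abs_cos_le_one _
    have e7 : |Real.sin (z / r) - Real.sin (x / r)| ≤ (z - x) / r := by
      have h := sin_sub_le hxzr; rwa [hrw] at h
    have e8 : |Real.sin (z / r) - Real.sin (x / r) - Real.cos (x / r) * ((z - x) / r)|
        ≤ ((z - x) / r) ^ 2 := by
      have h := sin_taylor hxzr; rwa [hrw] at h
    have e9 : |Real.cos (z / r) - Real.cos (x / r)| ≤ (z - x) / r := by
      have h := cos_sub_le hxzr; rwa [hrw] at h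
    have e10 : |Real.cos (z / r) - Real.cos (x / r) + Real.sin (x / r) * ((z - x) / r)|
        ≤ ((z - x) / r) ^ 2 := by
      have h := cos_taylor hxzr; rwa [hrw] at h
    have e1 := hm_lb x z hx hxz
    have e3 := hd9 x z hx hxz hzT
    have e4 := hmb x ⟨hx, le_trans hxz hzT⟩
    have e5 := hdb x ⟨hx, le_trans hxz hzT⟩
    have e6 := hMb x ⟨hx, le_trans hxz hzT⟩
    have hρ0 : (0:ℝ) ≤ ‖γ x‖ := norm_nonneg _
    have hdxv : d x = ‖γ x‖ ^ 2 - r ^ 2 := by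
      simp only [hddef, real_inner_self_eq_norm_sq]
    -- A1
    have A1 : 2 * Real.sin (z / r) * ((1 - ‖γ x‖ / r) * (z - x)) - (z - x) ^ 3 / (3 * r ^ 2)
        ≤ 2 * Real.sin (z / r) * (m z - m x) := by
      have h := mul_le_mul_of_nonneg_left e1 (by positivity : (0:ℝ) ≤ 2 * Real.sin (z / r))
      have hcube : (0:ℝ) ≤ (z - x) ^ 3 / (6 * r ^ 2) := by positivity
      have h2 : Real.sin (z / r) * ((z - x) ^ 3 / (6 * r ^ 2)) ≤ (z - x) ^ 3 / (6 * r ^ 2) :=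
        mul_le_of_le_one_left hcube hs2le1
      ring_nf at h h2 ⊢
      linarith only [h, h2]
    -- A2
    have A2 : 2 * Real.sin (x / r) * ((1 - ‖γ x‖ / r) * (z - x))
          - 2 * (1 + M / r) / r * (z - x) ^ 2
        ≤ 2 * Real.sin (z / r) * ((1 - ‖γ x‖ / r) * (z - x)) := by
      have hβ : |1 - ‖γ x‖ / r| ≤ 1 + M / r := by
        rw [abs_le]
        constructor
        · have : ‖γ x‖ / r ≤ M / r := by apply div_le_div_of_nonneg_right e6 hr.le
          linarith
        · have : (0:ℝ) ≤ ‖γ x‖ / r := by positivity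
          have hMr : (0:ℝ) ≤ M / r := by positivity
          linarith
      have habs : |(Real.sin (z / r) - Real.sin (x / r)) * (1 - ‖γ x‖ / r)|
          ≤ (z - x) / r * (1 + M / r) := by
        rw [abs_mul]
        exact mul_le_mul e7 hβ (abs_nonneg _) (by positivity)
      have h1 := (abs_le.mp habs).1
      have h2 := mul_le_mul_of_nonneg_right h1 hΔ
      ring_nf at h2 ⊢
      linarith only [h2]
    -- A3
    have A3 : 2 * m x * (Real.cos (x / r) * ((z - x) / r)) - 2 * M * ((z - x) / r) ^ 2
        ≤ 2 * m x * (Real.sin (z / r) - Real.sin (x / r)) := by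
      have habs : |m x * (Real.sin (z / r) - Real.sin (x / r)
          - Real.cos (x / r) * ((z - x) / r))| ≤ M * ((z - x) / r) ^ 2 := by
        rw [abs_mul]
        exact mul_le_mul e4 e8 (abs_nonneg _) (le_of_lt hM0)
      have h1 := (abs_le.mp habs).1
      ring_nf at h1 ⊢
      linarith only [h1]
    -- A4
    have A4 : -(2 * m x * (Real.cos (x / r) * (z - x))) - 2 * L * (z - x) ^ 2
          - 2 * M * (z - x) ^ 2 / r
        ≤ -(Real.cos (z / r) * (d z - d x)) := by
      have habs1 : |Real.cos (z / r) * (d z - d x - 2 * m x * (z - x))| ≤ 2 * L * (z - x) ^ 2 := by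
        rw [abs_mul]
        calc |Real.cos (z / r)| * |d z - d x - 2 * m x * (z - x)|
            ≤ 1 * (2 * L * (z - x) ^ 2) := mul_le_mul hc2abs e3 (abs_nonneg _) zero_le_one
          _ = 2 * L * (z - x) ^ 2 := one_mul _
      have habs2 : |(Real.cos (z / r) - Real.cos (x / r)) * (m x * (z - x))|
          ≤ (z - x) / r * (M * (z - x)) := by
        rw [abs_mul]
        refine mul_le_mul e9 ?_ (abs_nonneg _) (by positivity)
        rw [abs_mul, abs_of_nonneg hΔ]
        exact mul_le_mul_of_nonneg_right e4 hΔ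
      have h1 := (abs_le.mp habs1).2
      have h2 := (abs_le.mp habs2).2
      ring_nf at h1 h2 ⊢
      linarith only [h1, h2]
    -- A5
    have A5 : d x * (Real.sin (x / r) * ((z - x) / r)) - M ^ 2 * ((z - x) / r) ^ 2
        ≤ -(d x * (Real.cos (z / r) - Real.cos (x / r))) := by
      have habs : |d x * (Real.cos (z / r) - Real.cos (x / r)
          + Real.sin (x / r) * ((z - x) / r))| ≤ M ^ 2 * ((z - x) / r) ^ 2 := by
        rw [abs_mul]
        exact mul_le_mul e5 e10 (abs_nonneg _) (by positivity)
      have h1 := (abs_le.mp habs).2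
      ring_nf at h1 ⊢
      linarith only [h1]
    -- divide A4 and A5 by r
    have A4r := mul_le_mul_of_nonneg_right A4 (by positivity : (0:ℝ) ≤ 1 / r)
    have A5r := mul_le_mul_of_nonneg_right A5 (by positivity : (0:ℝ) ≤ 1 / r)
    -- first order terms cancel
    have hfo : 2 * Real.sin (x / r) * ((1 - ‖γ x‖ / r) * (z - x))
          + d x * (Real.sin (x / r) * ((z - x) / r)) * (1 / r)
        = Real.sin (x / r) * (z - x) * (1 - ‖γ x‖ / r) ^ 2 := by
      rw [hdxv]; field_simp; ring
    have hfo0 : 0 ≤ Real.sin (x / r) * (z - x) * (1 - ‖γ x‖ / r) ^ 2 :=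
      mul_nonneg (mul_nonneg hs1 hΔ) (sq_nonneg _)
    have hcubeT : (z - x) ^ 3 ≤ T * (z - x) ^ 2 := by
      have h := mul_nonneg (mul_nonneg hΔ hΔ) (sub_nonneg.mpr hΔT)
      ring_nf at h ⊢
      linarith only [h]
    have hiden : F z - F x = 2 * Real.sin (z / r) * (m z - m x)
        + 2 * m x * (Real.sin (z / r) - Real.sin (x / r))
        + (-(Real.cos (z / r) * (d z - d x))) * (1 / r)
        + (-(d x * (Real.cos (z / r) - Real.cos (x / r)))) * (1 / r) := by
      simp only [hFdef]
      field_simp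
      ring
    have hC : C * (z - x) ^ 2 = T / (3 * r ^ 2) * (z - x) ^ 2 + 2 * (1 + M / r) / r * (z - x) ^ 2
        + 2 * M / r ^ 2 * (z - x) ^ 2 + 2 * L / r * (z - x) ^ 2 + 2 * M / r ^ 2 * (z - x) ^ 2
        + M ^ 2 / r ^ 3 * (z - x) ^ 2 := by rw [hCdef]; ring
    have hcube2 : (z - x) ^ 3 / (3 * r ^ 2) ≤ T / (3 * r ^ 2) * (z - x) ^ 2 := by
      rw [div_le_iff₀ (by positivity : (0:ℝ) < 3 * r ^ 2)]
      calc (z - x) ^ 3 ≤ T * (z - x) ^ 2 := hcubeT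
        _ = T / (3 * r ^ 2) * (z - x) ^ 2 * (3 * r ^ 2) := by field_simp
    clear_value T M L C m d F
    ring_nf at A1 A2 A3 A4r A5r hfo hfo0 hcube2 hiden hC ⊢
    linarith only [A1, A2, A3, A4r, A5r, hfo, hfo0, hcube2, hiden, hC, hΔ, hΔT]
  have hm0 : m 0 = 0 := horth
  have hd0 : d 0 = 0 := by
    simp only [hddef, real_inner_self_eq_norm_sq, h0]; ring
  have hF0 : F 0 = 0 := by
    simp only [hFdef, hm0, hd0]
    norm_num
  -- F is nonnegative on [0,T]
  have hFpos : ∀ t ∈ Set.Icc (0:ℝ) T, 0 ≤ F t := by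
    intro t ht
    by_contra hneg
    push_neg at hneg
    have hFt : 0 < -F t := by linarith
    obtain ⟨N, hN⟩ := exists_nat_gt (C * t ^ 2 / (-F t))
    have hNpos : (0:ℝ) < N := lt_of_le_of_lt (by positivity) hN
    have hNne : (N:ℝ) ≠ 0 := ne_of_gt hNpos
    have htN : 0 ≤ t / N := div_nonneg ht.1 hNpos.le
    have htel := Finset.sum_range_sub (fun i : ℕ => F (i * (t / N))) N
    have hNt : (N : ℝ) * (t / N) = t := by field_simp
    rw [hNt] at htel
    simp only [Nat.cast_zero, zero_mul, hF0, sub_zero] at htel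
    have hstep : ∀ i ∈ Finset.range N, -(C * (t / N) ^ 2)
        ≤ F ((i + 1 : ℕ) * (t / N)) - F ((i : ℕ) * (t / N)) := by
      intro i hi
      have hiN : (i : ℝ) + 1 ≤ N := by
        have := Finset.mem_range.mp hi
        exact_mod_cast Nat.succ_le_of_lt this
      have hx0 : 0 ≤ (i : ℝ) * (t / N) := by positivity
      have hxz : (i : ℝ) * (t / N) ≤ ((i : ℝ) + 1) * (t / N) :=
        mul_le_mul_of_nonneg_right (by linarith) htN
      have hzT : ((i : ℝ) + 1) * (t / N) ≤ T := by
        have h1 : ((i : ℝ) + 1) * (t / N) ≤ N * (t / N) :=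
          mul_le_mul_of_nonneg_right hiN htN
        rw [hNt] at h1
        exact le_trans h1 ht.2
      have hk := hkey ((i : ℝ) * (t / N)) (((i : ℝ) + 1) * (t / N)) hx0 hxz hzT
      have hΔeq : ((i : ℝ) + 1) * (t / N) - (i : ℝ) * (t / N) = t / N := by ring
      rw [hΔeq] at hk
      push_cast
      linarith [hk]
    have hsum := Finset.sum_le_sum hstep
    rw [htel, Finset.sum_const, Finset.card_range, nsmul_eq_mul] at hsum
    have h3 : C * t ^ 2 < N * (-F t) := (div_lt_iff₀ hFt).mp hN
    have h4 : (N : ℝ) * -(C * (t / N) ^ 2) = -(C * t ^ 2 / N) := by field_simp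
    rw [h4] at hsum
    have h5 : C * t ^ 2 / N < -F t := by
      rw [div_lt_iff₀ hNpos]
      nlinarith [h3]
    linarith
  -- d is nonnegative on (0, T)
  have hdpos : ∀ t, 0 < t → t < T → 0 ≤ d t := by
    clear_value T M L C m d F
    intro t ht0 htT
    have hpi := Real.pi_pos
    have hLπr : (0:ℝ) < 2 * L * π * r := by
      have h1 : (0:ℝ) < 2 * L := by linarith
      exact mul_pos (mul_pos h1 hpi) hr
    have htr : t / r < π := by
      rw [div_lt_iff₀ hr]; rw [hTdef] at htT; linarith
    have hsint : 0 < Real.sin (t / r) :=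
      Real.sin_pos_of_pos_of_lt_pi (by positivity) htr
    have hGmono : ∀ a, 0 < a → a ≤ t →
        d a / Real.sin (a / r) ≤ d t / Real.sin (t / r) := by
      intro a ha0 hat
      refine monoDeriv (f := fun u => d u / Real.sin (u / r))
        (f' := fun u => (2 * m u * Real.sin (u / r)
          - d u * (Real.cos (u / r) * (1 / r))) / (Real.sin (u / r)) ^ 2) hat ?_ ?_
      · intro u hu
        have hu0 : 0 < u := lt_of_lt_of_le ha0 hu.1
        have hur : u / r < π := lt_of_le_of_lt
          (div_le_div_of_nonneg_right (le_trans hu.2 (le_refl t)) hr.le) htr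
        have hsinu : 0 < Real.sin (u / r) :=
          Real.sin_pos_of_pos_of_lt_pi (by positivity) hur
        have hder_sin : HasDerivAt (fun u : ℝ => Real.sin (u / r))
            (Real.cos (u / r) * (1 / r)) u := by
          have h1 : HasDerivAt (fun u : ℝ => u / r) (1 / r) u := (hasDerivAt_id u).div_const r
          exact (Real.hasDerivAt_sin (u / r)).comp u h1
        have := (hmd u hu0.le).div hder_sin (ne_of_gt hsinu)
        exact this
      · intro u hu
        have hu0 : 0 ≤ u := le_trans ha0.le hu.1
        have hFu := hFpos u ⟨hu0, le_trans hu.2 htT.le⟩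
        apply div_nonneg _ (sq_nonneg _)
        have he : 2 * m u * Real.sin (u / r) - d u * (Real.cos (u / r) * (1 / r)) = F u := by
          simp only [hFdef]; ring
        rw [he]; exact hFu
    by_contra hdt
    push_neg at hdt
    set a : ℝ := min t (min (T / 2) (-d t / (2 * L * π * r))) with hadef
    have ha0 : 0 < a := by
      apply lt_min ht0
      apply lt_min (by positivity)
      exact div_pos (by linarith) hLπr
    have hat : a ≤ t := min_le_left _ _
    have haT2 : a ≤ T / 2 := le_trans (min_le_right _ _) (min_le_left _ _)
    have hadt : a ≤ -d t / (2 * L * π * r) := le_trans (min_le_right _ _) (min_le_right _ _)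
    clear_value a
    -- |d a| ≤ 2 L a²
    have hda : -(2 * L * a ^ 2) ≤ d a := by
      have h := hd9 0 a (le_refl 0) ha0.le (by linarith)
      rw [hm0, hd0] at h
      have h1 := (abs_le.mp h).1
      have h2 : a - 0 = a := by ring
      rw [h2] at h1
      linarith [h1]
    -- sin (a/r) ≥ 2/π * (a/r)
    have har2 : a / r ≤ π / 2 := by
      rw [hTdef] at haT2
      rw [div_le_div_iff₀ hr (by norm_num : (0:ℝ) < 2)]
      linarith
    have hsa : 0 < Real.sin (a / r) :=
      Real.sin_pos_of_pos_of_lt_pi (by positivity)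
        (lt_of_le_of_lt har2 (by linarith))
    have hjordan : 2 / π * (a / r) ≤ Real.sin (a / r) :=
      Real.mul_le_sin (by positivity) har2
    -- d a / sin(a/r) ≥ -(L π r a)
    have hq : -(L * π * r * a) ≤ d a / Real.sin (a / r) := by
      rw [le_div_iff₀ hsa]
      have hz1 : -(L * π * r * a) * Real.sin (a / r)
          ≤ -(L * π * r * a) * (2 / π * (a / r)) := by
        apply mul_le_mul_of_nonpos_left hjordan
        nlinarith [hLπr, ha0]
      have hz2 : -(L * π * r * a) * (2 / π * (a / r)) = -(2 * L * a ^ 2) := by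
        field_simp
      rw [hz2] at hz1
      linarith [hda]
    have hmain := hGmono a ha0 hat
    -- d t / sin(t/r) ≤ d t since d t < 0 and 0 < sin ≤ 1
    have hslt1 : Real.sin (t / r) ≤ 1 := Real.sin_le_one _
    have hdiv : d t / Real.sin (t / r) ≤ d t := by
      rw [div_le_iff₀ hsint]
      nlinarith [hdt, hslt1, hsint]
    -- a ≤ -d t / (2 L π r) gives L π r a ≤ -d t / 2
    have hfin : L * π * r * a ≤ -d t / 2 := by
      rw [le_div_iff₀ hLπr] at hadt
      linarith [hadt]
    linarith [hq, hmain, hdiv, hfin, hdt]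
  -- d T ≥ 0 by continuity
  have hdT : 0 ≤ d T := by
    have hc : ContinuousAt d T := (hmd T hT.le).differentiableAt.continuousAt
    have hlim : Filter.Tendsto d (nhdsWithin T (Set.Iio T)) (nhds (d T)) :=
      hc.continuousWithinAt.tendsto
    refine ge_of_tendsto hlim ?_
    filter_upwards [Ioo_mem_nhdsLT_of_mem
      (show T ∈ Set.Ioc (T / 2) T from ⟨by linarith, le_refl T⟩)] with u hu
    exact hdpos u (lt_trans (by linarith : (0:ℝ) < T / 2) hu.1) hu.2
  -- conclusion
  intro t ht
  rcases eq_or_lt_of_le ht.1 with h|h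
  · rw [← h, h0]
  · have hdt : 0 ≤ d t := by
      rcases eq_or_lt_of_le ht.2 with h2|h2
      · rw [h2]; exact hdT
      · exact hdpos t h h2
    have he : d t = ‖γ t‖ ^ 2 - r ^ 2 := by
      simp only [hddef, real_inner_self_eq_norm_sq]
    rw [he] at hdt
    nlinarith [norm_nonneg (γ t), hr]
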